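/- Let A ∈ ℝ₊^{n×n} and let r, c ∈ ℝ₊^n with ‖r‖₁ = ‖c‖₁ = 1. Suppose (x, y) ∈ ℝ^n × ℝ^n satisfies c(A(x,y)) = c, where A(x,y)_{ij} = A_{ij} e^{x_i + y_j} and c(B)_j = ∑_i B_{ij}. Then for any (x*, y*) ∈ ℝ^n × ℝ^n, f(x, y) - f(x*, y*) ≤ ‖r(A(x,y)) - r‖₁ · (x_max - x_min + x*_max - x*_min), where f(x,y) = ∑_{i,j} A_{ij} e^{x_i+y_j} - ⟨r,x⟩ - ⟨c,y⟩, r(B)_i = ∑_j B_{ij}, and x_max, x_min denote the largest and smallest entries. -/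

import Mathlib

/-- The matrix-scaling potential `f(x,y) = ∑ A_{ij} e^{x_i+y_j} - ⟨r,x⟩ - ⟨c,y⟩`. -/
noncomputable def scalingPotential {n : ℕ} (A : Fin n → Fin n → ℝ) (r c x y : Fin n → ℝ) : ℝ :=
  (∑ i, ∑ j, A i j * Real.exp (x i + y j)) - (∑ i, r i * x i) - ∑ j, c j * y j

/-- Adaptive potential gap bound: if `c(A(x,y)) = c` then for any `(x*, y*)`,
`f(x,y) - f(x*,y*) ≤ ‖r(A(x,y)) - r‖₁ · (x_max - x_min + x*_max - x*_min)`. -/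
theorem adaptive_potential_gap {n : ℕ} [NeZero n] (A : Fin n → Fin n → ℝ)
    (hA : ∀ i j, 0 ≤ A i j) (r c : Fin n → ℝ)
    (hr : ∀ i, 0 ≤ r i) (hc : ∀ j, 0 ≤ c j) (hr1 : ∑ i, r i = 1) (hc1 : ∑ j, c j = 1)
    (x y : Fin n → ℝ) (hcol : ∀ j, (∑ i, A i j * Real.exp (x i + y j)) = c j)
    (xs ys : Fin n → ℝ) :
    scalingPotential A r c x y - scalingPotential A r c xs ys ≤
      (∑ i, |(∑ j, A i j * Real.exp (x i + y j)) - r i|) *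
        ((⨆ i, x i) - (⨅ i, x i) + ((⨆ i, xs i) - ⨅ i, xs i)) := by
  have hnonempty : Nonempty (Fin n) := Fin.pos_iff_nonempty.mp (Nat.pos_of_ne_zero (NeZero.ne n))
  set ρ : Fin n → ℝ := fun i => ∑ j, A i j * Real.exp (x i + y j) with hρdef
  -- row sums sum to 1
  have hsumρ : ∑ i, ρ i = 1 := by
    rw [hρdef]
    rw [Finset.sum_comm]
    simp only [hcol]
    exact hc1
  have hzero : ∑ i, (ρ i - r i) = 0 := by
    rw [Finset.sum_sub_distrib, hsumρ, hr1, sub_self]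
  -- Step 1: convexity-type bound
  have step1 : scalingPotential A r c x y - scalingPotential A r c xs ys ≤
      ∑ i, (ρ i - r i) * (x i - xs i) := by
    have hexp : ∀ i j, A i j * Real.exp (x i + y j) - A i j * Real.exp (xs i + ys j) ≤
        A i j * Real.exp (x i + y j) * ((x i + y j) - (xs i + ys j)) := by
      intro i j
      have h := Real.add_one_le_exp ((xs i + ys j) - (x i + y j))
      have hpos := Real.exp_pos (x i + y j)
      have h2 : Real.exp (x i + y j) * (((xs i + ys j) - (x i + y j)) + 1)
          ≤ Real.exp (x i + y j) * Real.exp ((xs i + ys j) - (x i + y j)) :=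
        mul_le_mul_of_nonneg_left h (le_of_lt hpos)
      rw [← Real.exp_add] at h2
      have h3 : x i + y j + ((xs i + ys j) - (x i + y j)) = xs i + ys j := by ring
      rw [h3] at h2
      nlinarith [hA i j]
    have hD : (∑ i, ∑ j, A i j * Real.exp (x i + y j)) -
        (∑ i, ∑ j, A i j * Real.exp (xs i + ys j)) ≤
        (∑ i, ρ i * (x i - xs i)) + ∑ j, c j * (y j - ys j) := by
      have h1 : (∑ i, ∑ j, A i j * Real.exp (x i + y j)) -
          (∑ i, ∑ j, A i j * Real.exp (xs i + ys j)) =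
          ∑ i, ∑ j, (A i j * Real.exp (x i + y j) - A i j * Real.exp (xs i + ys j)) := by
        rw [← Finset.sum_sub_distrib]
        exact Finset.sum_congr rfl fun i _ => (Finset.sum_sub_distrib _ _).symm
      rw [h1]
      have h2 : ∑ i, ∑ j, (A i j * Real.exp (x i + y j) - A i j * Real.exp (xs i + ys j)) ≤
          ∑ i, ∑ j, A i j * Real.exp (x i + y j) * ((x i + y j) - (xs i + ys j)) :=
        Finset.sum_le_sum fun i _ => Finset.sum_le_sum fun j _ => hexp i j
      refine h2.trans (le_of_eq ?_)
      have h3 : ∀ i j, A i j * Real.exp (x i + y j) * ((x i + y j) - (xs i + ys j)) =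
          A i j * Real.exp (x i + y j) * (x i - xs i) +
          A i j * Real.exp (x i + y j) * (y j - ys j) := by
        intro i j; ring
      simp only [h3]
      rw [Finset.sum_congr rfl fun i _ => Finset.sum_add_distrib, Finset.sum_add_distrib]
      congr 1
      · exact Finset.sum_congr rfl fun i _ => (Finset.sum_mul _ _ _).symm
      · rw [Finset.sum_comm]
        refine Finset.sum_congr rfl fun j _ => ?_
        rw [← Finset.sum_mul, hcol]
    unfold scalingPotential
    have hdist : ∑ i, (ρ i - r i) * (x i - xs i) =
        (∑ i, ρ i * (x i - xs i)) - (∑ i, r i * x i) + ∑ i, r i * xs i := by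
      rw [← Finset.sum_sub_distrib, ← Finset.sum_add_distrib]
      exact Finset.sum_congr rfl fun i _ => by ring
    have hcy : ∑ j, c j * (y j - ys j) = (∑ j, c j * y j) - ∑ j, c j * ys j := by
      rw [← Finset.sum_sub_distrib]
      exact Finset.sum_congr rfl fun j _ => by ring
    rw [hdist]
    rw [hcy] at hD
    linarith
  refine step1.trans ?_
  -- Step 2: shift to mean-zero representatives and bound
  set ix := ⨅ i, x i
  set sx := ⨆ i, x i
  set ixs := ⨅ i, xs i
  set sxs := ⨆ i, xs i
  set M := sx - ix + (sxs - ixs) with hM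
  have hshift : ∑ i, (ρ i - r i) * (x i - xs i) =
      ∑ i, (ρ i - r i) * ((x i - ix) - (xs i - ixs)) := by
    have : ∀ i, (ρ i - r i) * (x i - xs i) =
        (ρ i - r i) * ((x i - ix) - (xs i - ixs)) + (ρ i - r i) * (ix - ixs) := by
      intro i; ring
    simp only [this]
    rw [Finset.sum_add_distrib, ← Finset.sum_mul, hzero, zero_mul, add_zero]
  rw [hshift]
  have hbound : ∀ i, (ρ i - r i) * ((x i - ix) - (xs i - ixs)) ≤ |ρ i - r i| * M := by
    intro i
    have hx1 : ix ≤ x i := ciInf_le (Set.Finite.bddBelow (Set.finite_range x)) i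
    have hx2 : x i ≤ sx := le_ciSup (Set.Finite.bddAbove (Set.finite_range x)) i
    have hxs1 : ixs ≤ xs i := ciInf_le (Set.Finite.bddBelow (Set.finite_range xs)) i
    have hxs2 : xs i ≤ sxs := le_ciSup (Set.Finite.bddAbove (Set.finite_range xs)) i
    have habs : |(x i - ix) - (xs i - ixs)| ≤ M := by
      rw [abs_le]; constructor <;> [linarith; linarith]
    calc (ρ i - r i) * ((x i - ix) - (xs i - ixs))
        ≤ |(ρ i - r i) * ((x i - ix) - (xs i - ixs))| := le_abs_self _
      _ = |ρ i - r i| * |(x i - ix) - (xs i - ixs)| := abs_mul _ _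
      _ ≤ |ρ i - r i| * M := mul_le_mul_of_nonneg_left habs (abs_nonneg _)
  refine (Finset.sum_le_sum fun i _ => hbound i).trans (le_of_eq ?_)
  rw [← Finset.sum_mul]
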